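/- Let m be an even positive integer, let (c₁,…,c_m) ∈ ℂ^m be a quiddity cycle, and let t ∈ ℂ with t ≠ 0. Define c'_k = t·c_k for k odd and c'_k = t⁻¹·c_k for k even, 1 ≤ k ≤ m. Then: (a) (c'₁,…,c'_m) is a quiddity cycle; (b) extending both sequences periodically with period m to all k ∈ ℤ, for all integers i ≤ j the (1,1)-entry of η(c'_i)·η(c'_{i+1})⋯η(c'_j) is zero if and only if the (1,1)-entry of η(c_i)·η(c_{i+1})⋯η(c_j) is zero (so the frieze patterns corresponding to (c₁,…,c_m) and (c'₁,…,c'_m) have their zero entries at exactly the same positions). -/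
import Mathlib


/-- The matrix `η(c) = !![c, -1; 1, 0]` over `ℂ`. -/
def eta (c : ℂ) : Matrix (Fin 2) (Fin 2) ℂ := !![c, -1; 1, 0]

/-- For an even `m`, a quiddity cycle `(c₁, …, c_m)` (extended `m`-periodically to `ℤ`) and
`t ≠ 0`, the sequence `c'_k = t·c_k` (`k` odd), `c'_k = t⁻¹·c_k` (`k` even) is again a
quiddity cycle, and the corresponding frieze patterns have their zero entries at exactly
the same positions. -/
theorem stmt13 (m : ℕ) (hm : 0 < m) (hme : Even m) (c : ℤ → ℂ)
    (hper : ∀ k : ℤ, c (k + m) = c k)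
    (hq : ((List.range m).map (fun k => eta (c (1 + k)))).prod = -1)
    (t : ℂ) (ht : t ≠ 0)
    (c' : ℤ → ℂ)
    (hc' : ∀ k : ℤ, c' k = if Odd k then t * c k else t⁻¹ * c k) :
    (((List.range m).map (fun k => eta (c' (1 + k)))).prod = -1) ∧
    (∀ i j : ℤ, i ≤ j →
      ((((List.range (j - i + 1).toNat).map (fun k => eta (c' (i + k)))).prod 0 0 = 0) ↔
        (((List.range (j - i + 1).toNat).map (fun k => eta (c (i + k)))).prod 0 0 = 0))) := by
  set d : ℤ → Matrix (Fin 2) (Fin 2) ℂ :=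
    fun k => if Odd k then !![t, 0; 0, 1] else !![1, 0; 0, t] with hd
  have key : ∀ k : ℤ, eta (c' k) * d (k + 1) = d k * eta (c k) := by
    intro k
    rcases Int.even_or_odd k with hk | hk
    · have h1 : Odd (k + 1) := Even.add_one hk
      have h2 : ¬ Odd k := by simpa [Int.not_odd_iff_even] using hk
      simp only [hd, if_pos h1, if_neg h2, hc', eta]
      ext i j
      fin_cases i <;> fin_cases j <;>
        simp [Matrix.mul_apply, Fin.sum_univ_two] <;> field_simp
    · have h1 : ¬ Odd (k + 1) := by
        simp only [Int.not_odd_iff_even]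
        exact hk.add_one
      simp only [hd, if_neg h1, if_pos hk, hc', eta]
      ext i j
      fin_cases i <;> fin_cases j <;>
        simp [Matrix.mul_apply, Fin.sum_univ_two] <;> field_simp <;> ring
  have tele : ∀ (i : ℤ) (n : ℕ),
      ((List.range n).map (fun k : ℕ => eta (c' (i + (k : ℤ))))).prod * d (i + n) =
        d i * ((List.range n).map (fun k : ℕ => eta (c (i + (k : ℤ))))).prod := by
    intro i n
    induction n with
    | zero => simp
    | succ n ih =>
      rw [List.range_succ, List.map_append, List.map_append, List.prod_append,
        List.prod_append, List.map_singleton, List.map_singleton,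
        List.prod_singleton, List.prod_singleton]
      have hcast : (i + ((n : ℕ) + 1 : ℕ) : ℤ) = (i + n) + 1 := by push_cast; ring
      rw [hcast, Matrix.mul_assoc, key (i + n), ← Matrix.mul_assoc, ih, Matrix.mul_assoc]
  have hd01 : ∀ k : ℤ, d k 0 1 = 0 := by
    intro k; simp only [hd]; split <;> simp
  have hd10 : ∀ k : ℤ, d k 1 0 = 0 := by
    intro k; simp only [hd]; split <;> simp
  have hd00 : ∀ k : ℤ, d k 0 0 ≠ 0 := by
    intro k; simp only [hd]; split <;> simp [ht]
  simp only [List.bind_eq_flatMap, List.pure_def, ← List.map_eq_flatMap,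
    List.map_map, Function.comp_def] at hq ⊢
  constructor
  · have h := tele 1 m
    rw [hq] at h
    have hodd : Odd (1 + (m : ℤ)) := by
      have : Even (m : ℤ) := by exact_mod_cast hme
      simpa [add_comm] using this.add_one
    have hd1 : d 1 = !![t, 0; 0, 1] := by simp [hd]
    have hdm : d (1 + (m : ℤ)) = !![t, 0; 0, 1] := by simp [hd, hodd]
    rw [hdm, hd1] at h
    have he : (!![t, 0; 0, 1] : Matrix (Fin 2) (Fin 2) ℂ) * !![t⁻¹, 0; 0, 1] = 1 := by
      ext i j
      fin_cases i <;> fin_cases j <;>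
        simp [Matrix.mul_apply, Fin.sum_univ_two, Matrix.one_apply] <;> field_simp
    calc ((List.range m).map (fun k : ℕ => eta (c' (1 + (k : ℤ))))).prod
        = ((List.range m).map (fun k : ℕ => eta (c' (1 + (k : ℤ))))).prod *
            (!![t, 0; 0, 1] * !![t⁻¹, 0; 0, 1]) := by rw [he, mul_one]
      _ = (!![t, 0; 0, 1] * (-1)) * !![t⁻¹, 0; 0, 1] := by
          rw [← Matrix.mul_assoc, h]
      _ = -(!![t, 0; 0, 1] * !![t⁻¹, 0; 0, 1]) := by
          rw [Matrix.mul_neg, Matrix.mul_one, Matrix.neg_mul]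
      _ = -1 := by rw [he]
  · intro i j _
    set n := (j - i + 1).toNat with hn
    have h := tele i n
    have h00 := congrFun (congrFun h 0) 0
    rw [Matrix.mul_apply, Matrix.mul_apply, Fin.sum_univ_two, Fin.sum_univ_two,
      hd10, hd01, mul_zero, add_zero, zero_mul, add_zero] at h00
    -- h00 : P' 0 0 * d (i+n) 0 0 + P' 0 1 * 0 = d i 0 0 * P 0 0 + 0 * P 1 0
    constructor
    · intro hz
      rw [hz, zero_mul] at h00
      rcases mul_eq_zero.mp h00.symm with h' | h'
      · exact absurd h' (hd00 i)
      · exact h'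
    · intro hz
      rw [hz, mul_zero] at h00
      rcases mul_eq_zero.mp h00 with h' | h'
      · exact h'
      · exact absurd h' (hd00 (i + n))
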